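/- Let Z be a finite set, let P₀ and P₁ be probability mass functions on Z with the support of P₁ contained in the support of P₀, and let δ ∈ [0,1]. Then the Kullback–Leibler divergence of the mixture (1−δ)P₀ + δP₁ from P₀ satisfies D((1−δ)P₀ + δP₁ ‖ P₀) ≤ δ² · χ²(P₁ ‖ P₀). -/

import Mathlib

/-!
STATEMENT 0: For pmfs `P0, P1` on a finite set `Z` with support of `P1` contained in the
support of `P0` and `δ ∈ [0,1]`, the KL divergence of the mixture `(1-δ)P0 + δP1` from `P0`
satisfies `D((1-δ)P0 + δP1 ‖ P0) ≤ δ² · χ²(P1 ‖ P0)`.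
-/

open scoped BigOperators

/-- `P` is a probability mass function on the finite set `Z`. -/
def IsPmf {Z : Type*} [Fintype Z] (P : Z → ℝ) : Prop :=
  (∀ z, 0 ≤ P z) ∧ ∑ z, P z = 1

/-- Kullback–Leibler divergence (natural log, terms with `P z = 0` contribute `0`). -/
noncomputable def klDiv {Z : Type*} [Fintype Z] (P Q : Z → ℝ) : ℝ :=
  ∑ z, if 0 < P z then P z * Real.log (P z / Q z) else 0

/-- Chi-squared distance, the sum restricted to `z` with `Q z > 0`. -/
noncomputable def chiSq {Z : Type*} [Fintype Z] (P Q : Z → ℝ) : ℝ :=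
  ∑ z, if 0 < Q z then (P z - Q z) ^ 2 / Q z else 0

theorem klDiv_mixture_le_sq_mul_chiSq {Z : Type*} [Fintype Z]
    (P0 P1 : Z → ℝ) (hP0 : IsPmf P0) (hP1 : IsPmf P1)
    (hsupp : ∀ z, P0 z = 0 → P1 z = 0)
    (δ : ℝ) (hδ0 : 0 ≤ δ) (hδ1 : δ ≤ 1) :
    klDiv (fun z => (1 - δ) * P0 z + δ * P1 z) P0 ≤ δ ^ 2 * chiSq P1 P0 := by
  obtain ⟨h0nn, h0sum⟩ := hP0
  obtain ⟨h1nn, h1sum⟩ := hP1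
  set M : Z → ℝ := fun z => (1 - δ) * P0 z + δ * P1 z with hM
  have hMnn : ∀ z, 0 ≤ M z := fun z =>
    add_nonneg (mul_nonneg (by linarith) (h0nn z)) (mul_nonneg hδ0 (h1nn z))
  have hMsum : ∑ z, M z = 1 := by
    simp only [hM, Finset.sum_add_distrib, ← Finset.mul_sum, h0sum, h1sum]
    ring
  have hMzero : ∀ z, P0 z = 0 → M z = 0 := by
    intro z hz
    simp [hM, hz, hsupp z hz]
  have key : klDiv M P0 ≤ chiSq M P0 := by
    have hpoint : ∀ z, (if 0 < M z then M z * Real.log (M z / P0 z) else 0) + (P0 z - M z)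
        ≤ (if 0 < P0 z then (M z - P0 z) ^ 2 / P0 z else 0) := by
      intro z
      by_cases hP : 0 < P0 z
      · by_cases hMz : 0 < M z
        · simp only [if_pos hP, if_pos hMz]
          have hlog : Real.log (M z / P0 z) ≤ M z / P0 z - 1 :=
            Real.log_le_sub_one_of_pos (div_pos hMz hP)
          have hmul := mul_le_mul_of_nonneg_left hlog (le_of_lt hMz)
          have h2 : M z * (M z / P0 z - 1) = (M z) ^ 2 / P0 z - M z := by
            field_simp
          have h3 : (M z - P0 z) ^ 2 / P0 z = (M z) ^ 2 / P0 z - 2 * M z + P0 z := by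
            field_simp; ring
          nlinarith
        · have hm0 : M z = 0 := le_antisymm (not_lt.mp hMz) (hMnn z)
          simp only [if_neg hMz, if_pos hP, hm0]
          have h4 : (0 - P0 z) ^ 2 / P0 z = P0 z := by field_simp; ring
          rw [h4]
          simp
      · have hP0z : P0 z = 0 := le_antisymm (not_lt.mp hP) (h0nn z)
        have hMz : M z = 0 := hMzero z hP0z
        simp [hP0z, hMz]
    calc klDiv M P0
        = ∑ z, ((if 0 < M z then M z * Real.log (M z / P0 z) else 0) + (P0 z - M z)) := by
          rw [klDiv, Finset.sum_add_distrib, Finset.sum_sub_distrib, h0sum, hMsum]; ring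
      _ ≤ ∑ z, (if 0 < P0 z then (M z - P0 z) ^ 2 / P0 z else 0) :=
          Finset.sum_le_sum fun z _ => hpoint z
      _ = chiSq M P0 := rfl
  have heq : chiSq M P0 = δ ^ 2 * chiSq P1 P0 := by
    rw [chiSq, chiSq, Finset.mul_sum]
    refine Finset.sum_congr rfl fun z _ => ?_
    by_cases hP : 0 < P0 z
    · simp only [if_pos hP]
      have hd : M z - P0 z = δ * (P1 z - P0 z) := by simp only [hM]; ring
      rw [hd, mul_pow, mul_div_assoc]
    · simp [if_neg hP]
  linarith
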